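/- Let x : E → ℝ satisfy x(e) ≥ 0 for all e ∈ E and ∑_{e∈F} x(e) ≤ f(F) for every F ⊆ E. If S ⊆ E is tight for x, i.e. ∑_{e∈S} x(e) = f(S), then x(e) > 0 for every e ∈ S. -/
import Mathlib

/-- If `x ≥ 0` satisfies `∑_{e∈F} x e ≤ f F` for all `F ⊆ E`
(where `f(F) = 1 - ∏_{e∈F}(1 - p e)` with `0 < p e < 1`), and `S ⊆ E` is tight for `x`,
then `x e > 0` for every `e ∈ S`. -/
theorem tight_set_positive_coordinates
    {α : Type*} (E : Finset α) (p : α → ℝ)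
    (hp : ∀ e ∈ E, 0 < p e ∧ p e < 1)
    (x : α → ℝ) (hxnn : ∀ e ∈ E, 0 ≤ x e)
    (hx : ∀ F ⊆ E, ∑ e ∈ F, x e ≤ 1 - ∏ e ∈ F, (1 - p e))
    (S : Finset α) (hS : S ⊆ E)
    (ht : ∑ e ∈ S, x e = 1 - ∏ e ∈ S, (1 - p e)) :
    ∀ e ∈ S, 0 < x e := by
  classical
  intro e he
  have hFe := hx (S.erase e) ((Finset.erase_subset _ _).trans hS)
  have hsum : ∑ a ∈ S, x a = x e + ∑ a ∈ S.erase e, x a :=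
    (Finset.add_sum_erase S x he).symm
  have hprod : ∏ a ∈ S, (1 - p a) = (1 - p e) * ∏ a ∈ S.erase e, (1 - p a) :=
    (Finset.mul_prod_erase S _ he).symm
  have hpos : 0 < ∏ a ∈ S.erase e, (1 - p a) :=
    Finset.prod_pos (fun a ha => by
      have := hp a (hS (Finset.mem_of_mem_erase ha)); linarith [this.2])
  have hpe := hp e (hS he)
  nlinarith [mul_pos hpe.1 hpos]
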